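/- The independence number of the circulant graph $Ci_{4N}(1, 2N)$ on $4N$ vertices with connection set $\{1, 2N\}$ is $2N - 1$ for every integer $N \geq 2$. -/

import Mathlib

/-- Helper: characterize `a % M = b` when `a < 2*M`. -/
lemma mod_helper (M a b : ℕ) (hM : 0 < M) (ha : a < 2*M) (hb : b < M) :
    a % M = b ↔ (a = b ∨ a = b + M) := by
  rcases lt_or_ge a M with h | h
  · rw [Nat.mod_eq_of_lt h]; omega
  · rw [Nat.mod_eq_sub_mod h, Nat.mod_eq_of_lt (by omega)]; omega

open Fin.NatCast Fin.CommRing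

/-- The independence number of the circulant graph `Ci_{4N}(1, 2N)` is `2N - 1`. -/
theorem indepNum_mobius_ladder (N : ℕ) (hN : 2 ≤ N) :
    let Adj : Fin (4 * N) → Fin (4 * N) → Prop := fun i j =>
      (i.val + 1) % (4 * N) = j.val ∨ (j.val + 1) % (4 * N) = i.val ∨
        (i.val + 2 * N) % (4 * N) = j.val
    IsGreatest
      {m : ℕ | ∃ S : Finset (Fin (4 * N)),
        (∀ i ∈ S, ∀ j ∈ S, ¬ Adj i j) ∧ S.card = m}
      (2 * N - 1) := by
  intro Adj
  haveI : NeZero (4 * N) := ⟨by omega⟩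
  constructor
  · -- lower bound: exhibit an independent set of size 2N-1
    set g : Fin (2 * N - 1) → Fin (4 * N) := fun k =>
      if h : k.val < N - 1 then ⟨2 * k.val + 1, by omega⟩ else ⟨2 * k.val + 2, by
        have := k.isLt; omega⟩ with hg
    have hgval : ∀ k : Fin (2 * N - 1),
        ((g k).val = 2 * k.val + 1 ∧ k.val < N - 1) ∨
        ((g k).val = 2 * k.val + 2 ∧ N - 1 ≤ k.val) := by
      intro k
      by_cases h : k.val < N - 1
      · left; simp [hg, h]
      · right; simp [hg, h]; omega
    refine ⟨Finset.univ.image g, ?_, ?_⟩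
    · intro i hi j hj hAdj
      simp only [Finset.mem_image, Finset.mem_univ, true_and] at hi hj
      obtain ⟨k, rfl⟩ := hi
      obtain ⟨l, rfl⟩ := hj
      have hk := hgval k
      have hl := hgval l
      have hkb := k.isLt
      have hlb := l.isLt
      have hik : (g k).val < 4 * N := (g k).isLt
      have hjl : (g l).val < 4 * N := (g l).isLt
      rcases hAdj with h | h | h
      · rw [mod_helper (4*N) _ _ (by omega) (by omega) hjl] at h
        rcases hk with ⟨hk, hk'⟩ | ⟨hk, hk'⟩ <;> rcases hl with ⟨hl, hl'⟩ | ⟨hl, hl'⟩ <;> omega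
      · rw [mod_helper (4*N) _ _ (by omega) (by omega) hik] at h
        rcases hk with ⟨hk, hk'⟩ | ⟨hk, hk'⟩ <;> rcases hl with ⟨hl, hl'⟩ | ⟨hl, hl'⟩ <;> omega
      · rw [mod_helper (4*N) _ _ (by omega) (by omega) hjl] at h
        rcases hk with ⟨hk, hk'⟩ | ⟨hk, hk'⟩ <;> rcases hl with ⟨hl, hl'⟩ | ⟨hl, hl'⟩ <;> omega
    · have hginj : Function.Injective g := by
        intro k l hkl
        have hk := hgval k
        have hl := hgval l
        have : (g k).val = (g l).val := by rw [hkl]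
        apply Fin.ext
        rcases hk with ⟨hk, hk'⟩ | ⟨hk, hk'⟩ <;> rcases hl with ⟨hl, hl'⟩ | ⟨hl, hl'⟩ <;> omega
      rw [Finset.card_image_of_injective _ hginj, Finset.card_univ, Fintype.card_fin]
  · -- upper bound
    rintro m ⟨S, hInd, rfl⟩
    have hval1 : (1 : Fin (4 * N)).val = 1 := by
      rw [Fin.val_one', Nat.mod_eq_of_lt (by omega)]
    have hadd1 : ∀ s : Fin (4 * N), (s + 1).val = (s.val + 1) % (4 * N) := by
      intro s; rw [Fin.add_def, hval1]
    have adj1 : ∀ s : Fin (4 * N), Adj s (s + 1) := by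
      intro s; exact Or.inl (hadd1 s).symm
    -- Step A : card ≤ 2N
    have hA : S.card ≤ 2 * N := by
      have : S.card ≤ (Finset.univ : Finset (Fin (2 * N))).card := by
        apply Finset.card_le_card_of_injOn
          (fun i => if h : i.val < 2 * N then ⟨i.val, h⟩ else ⟨i.val - 2 * N, by
            have := i.isLt; omega⟩)
        · intro _ _; exact Finset.mem_univ _
        · intro i hi j hj hij
          by_contra hne
          have hvne : i.val ≠ j.val := fun h => hne (Fin.ext h)
          have hii := i.isLt
          have hjj := j.isLt
          have hcase : j.val = i.val + 2 * N ∨ i.val = j.val + 2 * N := by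
            simp only at hij
            split_ifs at hij <;> rw [Fin.mk.injEq] at hij <;> omega
          rcases hcase with h | h
          · exact hInd i hi j hj (Or.inr (Or.inr (by
              rw [Nat.mod_eq_of_lt (by omega)]; omega)))
          · exact hInd j hj i hi (Or.inr (Or.inr (by
              rw [Nat.mod_eq_of_lt (by omega)]; omega)))
      simpa using this
    by_contra hlt
    have hcard : S.card = 2 * N := by omega
    -- Step B : shift map
    have hsub : Finset.image (fun s => s + 1) S ⊆ Sᶜ := by
      intro t ht
      simp only [Finset.mem_image] at ht
      obtain ⟨s, hs, rfl⟩ := ht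
      rw [Finset.mem_compl]
      intro hmem
      exact hInd s hs _ hmem (adj1 s)
    have himgcard : (Finset.image (fun s : Fin (4*N) => s + 1) S).card = 2 * N := by
      rw [Finset.card_image_of_injective _ (add_left_injective 1), hcard]
    have hcomplcard : (Sᶜ : Finset (Fin (4*N))).card = 2 * N := by
      rw [Finset.card_compl, hcard, Fintype.card_fin]; omega
    have himg : Finset.image (fun s : Fin (4*N) => s + 1) S = Sᶜ :=
      Finset.eq_of_subset_of_card_le hsub (by omega)
    have hpred : ∀ t : Fin (4 * N), t ∉ S → ∃ s ∈ S, s + 1 = t := by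
      intro t ht
      have : t ∈ Sᶜ := Finset.mem_compl.mpr ht
      rw [← himg, Finset.mem_image] at this
      exact this
    have hstep : ∀ s ∈ S, s + 1 + 1 ∈ S := by
      intro s hs
      by_contra h
      obtain ⟨u, hu, hue⟩ := hpred _ h
      have : u = s + 1 := add_right_cancel hue
      subst this
      exact hInd s hs _ hu (adj1 s)
    obtain ⟨s, hs⟩ := Finset.card_pos.mp (by omega : 0 < S.card)
    have hiter : ∀ k : ℕ, s + ((2 * k : ℕ) : Fin (4 * N)) ∈ S := by
      intro k
      induction k with
      | zero => simpa using hs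
      | succ k ih =>
        have e : s + ((2 * (k+1) : ℕ) : Fin (4 * N))
            = s + ((2 * k : ℕ) : Fin (4 * N)) + 1 + 1 := by
          push_cast; ring
        rw [e]
        exact hstep _ ih
    have hN2 := hiter N
    apply hInd s hs _ hN2
    refine Or.inr (Or.inr ?_)
    rw [Fin.add_def, Fin.val_natCast, Nat.mod_eq_of_lt (show 2 * N < 4 * N by omega)]
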